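/- Let k ≥ 2 be an integer, a = π/k, and let W be a complex-valued square-integrable function on (0,π) satisfying ∑_{j=0}^{⌊(k−1)/2⌋} W(2ja + t) + ∑_{j=1}^{⌊k/2⌋} W(2ja − t) = 0 for almost every t ∈ (0,a). Then for every complex-valued square-integrable function p on (0,a) there exists a complex-valued square-integrable function q on (0,π), unique up to equality almost everywhere, such that q(x) = p(x) for almost every x ∈ (0,a) and W_{0,0}(t) = W(t) for almost every t ∈ (0,π), where W_{0,0} is the function associated with q. -/

import Mathlib

open MeasureTheory


open MeasureTheory

/-- The function `W_{0,0}` associated with `q`, where `a = π/k`. -/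
noncomputable def W00 (k : ℕ) (q : ℝ → ℂ) (t : ℝ) : ℂ :=
  let a := Real.pi / k
  if t ∈ Set.Ioo 0 a then
    (q (Real.pi - a + t) + q (Real.pi - a - t)) / 2
  else if t ∈ Set.Ioo a (Real.pi - a) then
    (q (Real.pi - a - t) - q (Real.pi + a - t)) / 2
  else if t ∈ Set.Ioo (Real.pi - a) Real.pi then
    -(q (Real.pi + a - t) + q (t - Real.pi + a)) / 2
  else 0

noncomputable def gAux (p W : ℝ → ℂ) (a : ℝ) (m : ℕ) (x : ℝ) : ℂ :=
  if Even m then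
    p (x - m * a) - 2 * ∑ i ∈ Finset.range (m / 2), W (Real.pi + a - x + 2 * i * a)
  else
    -p ((m + 1) * a - x) - 2 * ∑ i ∈ Finset.range ((m + 1) / 2), W (Real.pi + a - x + 2 * i * a)

noncomputable def qAux (p W : ℝ → ℂ) (a : ℝ) (k : ℕ) (x : ℝ) : ℂ :=
  ∑ m ∈ Finset.range k, Set.indicator (Set.Ioo (m * a) ((m + 1) * a)) (gAux p W a m) x

lemma gAux_succ_succ (p W : ℝ → ℂ) (a : ℝ) (m : ℕ) (x : ℝ) :
    gAux p W a (m + 2) x = gAux p W a m (x - 2 * a) - 2 * W (Real.pi + a - x) := by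
  rcases Nat.even_or_odd m with h | h
  · rw [gAux, gAux, if_pos (by rw [Nat.even_iff] at h ⊢; omega), if_pos h,
      show (m + 2) / 2 = m / 2 + 1 from Nat.add_div_right m (by norm_num),
      Finset.sum_range_succ']
    have hs : ∑ i ∈ Finset.range (m/2), W (Real.pi + a - x + 2 * (↑(i+1)) * a)
        = ∑ i ∈ Finset.range (m/2), W (Real.pi + a - (x - 2*a) + 2 * (i:ℝ) * a) :=
      Finset.sum_congr rfl fun i _ => congrArg W (by push_cast; ring)
    rw [hs, show x - ((m+2:ℕ):ℝ) * a = x - 2*a - (m:ℝ)*a from by push_cast; ring,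
      show Real.pi + a - x + 2 * ((0:ℕ):ℝ) * a = Real.pi + a - x from by push_cast; ring]
    ring
  · rw [gAux, gAux, if_neg (by rw [Nat.odd_iff] at h; rw [Nat.even_iff]; omega), if_neg (Nat.not_even_iff_odd.mpr h),
      show (m + 2 + 1) / 2 = (m + 1) / 2 + 1 from by omega,
      Finset.sum_range_succ']
    have hs : ∑ i ∈ Finset.range ((m+1)/2), W (Real.pi + a - x + 2 * (↑(i+1)) * a)
        = ∑ i ∈ Finset.range ((m+1)/2), W (Real.pi + a - (x - 2*a) + 2 * (i:ℝ) * a) :=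
      Finset.sum_congr rfl fun i _ => congrArg W (by push_cast; ring)
    rw [hs, show (((m+2:ℕ):ℝ) + 1) * a - x = (((m:ℕ):ℝ) + 1) * a - (x - 2*a) from by push_cast; ring,
      show Real.pi + a - x + 2 * ((0:ℕ):ℝ) * a = Real.pi + a - x from by push_cast; ring]
    ring

lemma qAux_eq (p W : ℝ → ℂ) {a : ℝ} (ha : 0 < a) (k m : ℕ) (hm : m < k) {x : ℝ}
    (hx : x ∈ Set.Ioo ((m:ℝ) * a) (((m:ℝ) + 1) * a)) :
    qAux p W a k x = gAux p W a m x := by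
  rw [qAux, Finset.sum_eq_single_of_mem m (Finset.mem_range.mpr hm)]
  · exact Set.indicator_of_mem hx _
  · intro b _ hbm
    apply Set.indicator_of_notMem
    intro hxb
    obtain ⟨hx1, hx2⟩ := hx
    obtain ⟨hb1, hb2⟩ := hxb
    rcases lt_or_gt_of_ne hbm with h | h
    · have h' : ((b:ℝ) + 1) ≤ (m:ℝ) := by exact_mod_cast h
      nlinarith
    · have h' : ((m:ℝ) + 1) ≤ (b:ℝ) := by exact_mod_cast h
      nlinarith

open MeasureTheory

lemma exists_subinterval {a : ℝ} (ha : 0 < a) (k : ℕ) {x : ℝ} (hx0 : 0 < x) (hxk : x < k * a)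
    (hG : ∀ j : ℕ, x ≠ j * a) :
    ∃ m : ℕ, m < k ∧ (m:ℝ) * a < x ∧ x < ((m:ℝ) + 1) * a := by
  refine ⟨⌊x / a⌋₊, ?_, ?_, ?_⟩
  · rw [Nat.floor_lt (by positivity)]
    exact (div_lt_iff₀ ha).mpr hxk
  · have h1 : (⌊x / a⌋₊ : ℝ) * a ≤ x := by
      have h := Nat.floor_le (show 0 ≤ x/a by positivity)
      calc (⌊x / a⌋₊:ℝ)*a ≤ (x/a)*a := by nlinarith
        _ = x := by field_simp
    exact h1.lt_of_ne fun h => hG _ h.symm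
  · have h := Nat.lt_floor_add_one (x/a)
    calc x = (x/a)*a := by field_simp
      _ < ((⌊x/a⌋₊:ℝ)+1)*a := by nlinarith

lemma ae_comp_mp {T : ℝ → ℝ} (hT : MeasurePreserving T (volume : Measure ℝ) volume)
    {P : ℝ → Prop} (h : ∀ᵐ y ∂(volume : Measure ℝ), P y) :
    ∀ᵐ x ∂(volume : Measure ℝ), P (T x) := by
  rw [MeasureTheory.ae_iff] at h ⊢
  exact hT.quasiMeasurePreserving.preimage_null h

lemma mp_refl (c : ℝ) : MeasurePreserving (fun x : ℝ => c - x) volume volume := by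
  have h1 : MeasurePreserving (fun x : ℝ => -x) volume volume := Measure.measurePreserving_neg volume
  have h2 := measurePreserving_add_left (volume : Measure ℝ) c
  have h3 := h2.comp h1
  have he : ((fun x : ℝ => c + x) ∘ fun x : ℝ => -x) = fun x : ℝ => c - x := by
    funext x; simp [sub_eq_add_neg]
  rwa [he] at h3

lemma memLp_comp_sub (f : ℝ → ℂ) {u v : ℝ} (hf : MemLp f 2 (volume.restrict (Set.Ioo u v)))
    (c : ℝ) :
    MemLp (fun x => f (x - c)) 2 (volume.restrict (Set.Ioo (u + c) (v + c))) := by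
  have hpre : (fun x : ℝ => x - c) ⁻¹' (Set.Ioo u v) = Set.Ioo (u + c) (v + c) := by
    ext x
    simp only [Set.mem_preimage, Set.mem_Ioo]
    constructor <;> rintro ⟨h1, h2⟩ <;> constructor <;> linarith
  have hT := (measurePreserving_sub_right (volume : Measure ℝ) c).restrict_preimage
    (measurableSet_Ioo (a := u) (b := v))
  rw [hpre] at hT
  exact hf.comp_measurePreserving hT

lemma memLp_comp_refl (f : ℝ → ℂ) {u v : ℝ} (hf : MemLp f 2 (volume.restrict (Set.Ioo u v)))
    (c : ℝ) :
    MemLp (fun x => f (c - x)) 2 (volume.restrict (Set.Ioo (c - v) (c - u))) := by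
  have hpre : (fun x : ℝ => c - x) ⁻¹' (Set.Ioo u v) = Set.Ioo (c - v) (c - u) := by
    ext x
    simp only [Set.mem_preimage, Set.mem_Ioo]
    constructor <;> rintro ⟨h1, h2⟩ <;> constructor <;> linarith
  have hT := (mp_refl c).restrict_preimage (measurableSet_Ioo (a := u) (b := v))
  rw [hpre] at hT
  exact hf.comp_measurePreserving hT
lemma memLp_gAux (k : ℕ) (p W : ℝ → ℂ) {a : ℝ} (ha : 0 < a)
    (hka : (k:ℝ) * a = Real.pi)
    (hp : MemLp p 2 (volume.restrict (Set.Ioo 0 a)))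
    (hW : MemLp W 2 (volume.restrict (Set.Ioo 0 Real.pi)))
    (m : ℕ) (hm : m < k) :
    MemLp (gAux p W a m) 2 (volume.restrict (Set.Ioo ((m:ℝ)*a) (((m:ℝ)+1)*a))) := by
  have hm' : (m:ℝ) + 1 ≤ (k:ℝ) := by exact_mod_cast hm
  have hWterm : ∀ i : ℕ, 2*i+1 ≤ m → MemLp (fun x => W (Real.pi + a - x + 2*(i:ℝ)*a)) 2
      (volume.restrict (Set.Ioo ((m:ℝ)*a) (((m:ℝ)+1)*a))) := by
    intro i hi
    have h1 := memLp_comp_refl W hW (Real.pi + a + 2*(i:ℝ)*a)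
    have h2 : MemLp (fun x => W ((Real.pi + a + 2*(i:ℝ)*a) - x)) 2
        (volume.restrict (Set.Ioo ((m:ℝ)*a) (((m:ℝ)+1)*a))) := by
      refine h1.mono_measure (Measure.restrict_mono ?_ le_rfl)
      intro x hx
      simp only [Set.mem_Ioo] at hx ⊢
      have hi' : (2*(i:ℝ)+1) ≤ (m:ℝ) := by exact_mod_cast hi
      constructor
      · nlinarith [hx.1]
      · nlinarith [hx.2]
    have he : (fun x => W (Real.pi + a - x + 2*(i:ℝ)*a))
        = fun x => W ((Real.pi + a + 2*(i:ℝ)*a) - x) := by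
      funext x; congr 1; ring
    rw [he]; exact h2
  rcases Nat.even_or_odd m with he | ho
  · have hg : gAux p W a m = fun x =>
        p (x - (m:ℝ)*a) - 2*∑ i ∈ Finset.range (m/2), W (Real.pi + a - x + 2*(i:ℝ)*a) := by
      funext x; rw [gAux, if_pos he]
    rw [hg]
    apply MemLp.sub
    · have h1 := memLp_comp_sub p hp ((m:ℝ)*a)
      have he' : Set.Ioo ((0:ℝ) + (m:ℝ)*a) (a + (m:ℝ)*a) = Set.Ioo ((m:ℝ)*a) (((m:ℝ)+1)*a) := by
        congr 1 <;> ring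
      rwa [he'] at h1
    · apply MemLp.const_mul
      apply memLp_finset_sum
      intro i hi
      rw [Finset.mem_range] at hi
      have he2 := Nat.even_iff.mp he
      exact hWterm i (by omega)
  · have hg : gAux p W a m = fun x =>
        -p (((m:ℝ)+1)*a - x) - 2*∑ i ∈ Finset.range ((m+1)/2), W (Real.pi + a - x + 2*(i:ℝ)*a) := by
      funext x; rw [gAux, if_neg (Nat.not_even_iff_odd.mpr ho)]
    rw [hg]
    apply MemLp.sub
    · have h1 := (memLp_comp_refl p hp (((m:ℝ)+1)*a)).neg
      have he' : Set.Ioo ((((m:ℝ)+1)*a) - a) ((((m:ℝ)+1)*a) - 0) = Set.Ioo ((m:ℝ)*a) (((m:ℝ)+1)*a) := by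
        congr 1 <;> ring
      rwa [he'] at h1
    · apply MemLp.const_mul
      apply memLp_finset_sum
      intro i hi
      rw [Finset.mem_range] at hi
      have ho2 := Nat.odd_iff.mp ho
      exact hWterm i (by omega)

lemma memLp_qAux (k : ℕ) (p W : ℝ → ℂ) {a : ℝ} (ha : 0 < a)
    (hka : (k:ℝ) * a = Real.pi)
    (hp : MemLp p 2 (volume.restrict (Set.Ioo 0 a)))
    (hW : MemLp W 2 (volume.restrict (Set.Ioo 0 Real.pi))) :
    MemLp (qAux p W a k) 2 (volume.restrict (Set.Ioo 0 Real.pi)) := by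
  have hq : qAux p W a k = fun x => ∑ m ∈ Finset.range k,
      Set.indicator (Set.Ioo ((m:ℝ)*a) (((m:ℝ)+1)*a)) (gAux p W a m) x := rfl
  rw [hq]
  apply memLp_finset_sum
  intro m hm
  rw [Finset.mem_range] at hm
  have hm' : (m:ℝ) + 1 ≤ (k:ℝ) := by exact_mod_cast hm
  have hsub : Set.Ioo ((m:ℝ)*a) (((m:ℝ)+1)*a) ⊆ Set.Ioo 0 Real.pi := by
    intro x hx
    simp only [Set.mem_Ioo] at hx ⊢
    constructor
    · nlinarith [hx.1]
    · nlinarith [hx.2]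
  rw [memLp_indicator_iff_restrict measurableSet_Ioo,
    Measure.restrict_restrict measurableSet_Ioo,
    Set.inter_eq_self_of_subset_left hsub]
  exact memLp_gAux k p W ha hka hp hW m hm
lemma main_identity (k : ℕ) (hk : 2 ≤ k) (p W : ℝ → ℂ) (a t : ℝ)
    (hka : (k : ℝ) * a = Real.pi)
    (ht : ∑ j ∈ Finset.range ((k - 1) / 2 + 1), W (2 * j * a + t) +
        ∑ j ∈ Finset.Icc 1 (k / 2), W (2 * j * a - t) = 0) :
    gAux p W a (k - 1) (Real.pi - a + t) + gAux p W a (k - 2) (Real.pi - a - t) = 2 * W t := by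
  obtain ⟨n, hn | hn⟩ : ∃ n, k = 2*n+2 ∨ k = 2*n+3 := ⟨(k-2)/2, by omega⟩
  · subst hn
    push_cast at hka
    rw [show (2*n+2-1)/2 + 1 = n+1 from by omega, show (2*n+2)/2 = n+1 from by omega] at ht
    have hA : ∑ j ∈ Finset.range (n+1), W (2 * (j:ℝ) * a + t)
        = W t + ∑ i ∈ Finset.range n, W (2*((i:ℝ)+1)*a + t) := by
      rw [Finset.sum_range_succ', add_comm]
      congr 1
      · congr 1; push_cast; ring
      · exact Finset.sum_congr rfl fun i _ => congrArg W (by push_cast; ring)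
    have hB : ∑ j ∈ Finset.Icc 1 (n+1), W (2 * (j:ℝ) * a - t)
        = ∑ i ∈ Finset.range (n+1), W (2*((i:ℝ)+1)*a - t) := by
      rw [← Finset.Ico_add_one_right_eq_Icc, Finset.sum_Ico_eq_sum_range]
      exact Finset.sum_congr rfl fun i _ => congrArg W (by push_cast; ring)
    rw [hA, hB] at ht
    rw [show 2*n+2-1 = 2*n+1 from by omega, show 2*n+2-2 = 2*n from by omega,
      gAux, gAux, if_neg (by rw [Nat.even_iff]; omega), if_pos (by rw [Nat.even_iff]; omega),
      show (2*n+1+1)/2 = n+1 from by omega, show (2*n)/2 = n from by omega]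
    have hC : ∑ i ∈ Finset.range (n+1), W (Real.pi + a - (Real.pi - a + t) + 2*(i:ℝ)*a)
        = ∑ i ∈ Finset.range (n+1), W (2*((i:ℝ)+1)*a - t) :=
      Finset.sum_congr rfl fun i _ => congrArg W (by ring)
    have hD : ∑ i ∈ Finset.range n, W (Real.pi + a - (Real.pi - a - t) + 2*(i:ℝ)*a)
        = ∑ i ∈ Finset.range n, W (2*((i:ℝ)+1)*a + t) :=
      Finset.sum_congr rfl fun i _ => congrArg W (by ring)
    rw [hC, hD,
      show (((2*n+1:ℕ):ℝ) + 1) * a - (Real.pi - a + t) = a - t from by push_cast; linarith [hka],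
      show (Real.pi - a - t) - ((2*n:ℕ):ℝ) * a = a - t from by push_cast; linarith [hka]]
    linear_combination (-2 : ℂ) * ht
  · subst hn
    push_cast at hka
    rw [show (2*n+3-1)/2 + 1 = n+2 from by omega, show (2*n+3)/2 = n+1 from by omega] at ht
    have hA : ∑ j ∈ Finset.range (n+2), W (2 * (j:ℝ) * a + t)
        = W t + ∑ i ∈ Finset.range (n+1), W (2*((i:ℝ)+1)*a + t) := by
      rw [Finset.sum_range_succ', add_comm]
      congr 1
      · congr 1; push_cast; ring
      · exact Finset.sum_congr rfl fun i _ => congrArg W (by push_cast; ring)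
    have hB : ∑ j ∈ Finset.Icc 1 (n+1), W (2 * (j:ℝ) * a - t)
        = ∑ i ∈ Finset.range (n+1), W (2*((i:ℝ)+1)*a - t) := by
      rw [← Finset.Ico_add_one_right_eq_Icc, Finset.sum_Ico_eq_sum_range]
      exact Finset.sum_congr rfl fun i _ => congrArg W (by push_cast; ring)
    rw [hA, hB] at ht
    rw [show 2*n+3-1 = 2*n+2 from by omega, show 2*n+3-2 = 2*n+1 from by omega,
      gAux, gAux, if_pos (by rw [Nat.even_iff]; omega), if_neg (by rw [Nat.even_iff]; omega),
      show (2*n+2)/2 = n+1 from by omega]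
    have hC : ∑ i ∈ Finset.range (n+1), W (Real.pi + a - (Real.pi - a + t) + 2*(i:ℝ)*a)
        = ∑ i ∈ Finset.range (n+1), W (2*((i:ℝ)+1)*a - t) :=
      Finset.sum_congr rfl fun i _ => congrArg W (by ring)
    have hD : ∑ i ∈ Finset.range (n+1), W (Real.pi + a - (Real.pi - a - t) + 2*(i:ℝ)*a)
        = ∑ i ∈ Finset.range (n+1), W (2*((i:ℝ)+1)*a + t) :=
      Finset.sum_congr rfl fun i _ => congrArg W (by ring)
    rw [hC, hD,
      show (Real.pi - a + t) - ((2*n+2:ℕ):ℝ) * a = t from by push_cast; linarith [hka],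
      show (((2*n+1:ℕ):ℝ) + 1) * a - (Real.pi - a - t) = t from by push_cast; linarith [hka]]
    linear_combination (-2 : ℂ) * ht

theorem isospectral_potentials (k : ℕ) (hk : 2 ≤ k)
    (W : ℝ → ℂ) (hW : MemLp W 2 (volume.restrict (Set.Ioo 0 Real.pi)))
    (hdeg : ∀ᵐ t ∂(volume.restrict (Set.Ioo (0:ℝ) (Real.pi / k))),
      ∑ j ∈ Finset.range ((k - 1) / 2 + 1), W (2 * j * (Real.pi / k) + t) +
        ∑ j ∈ Finset.Icc 1 (k / 2), W (2 * j * (Real.pi / k) - t) = 0) :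
    ∀ p : ℝ → ℂ, MemLp p 2 (volume.restrict (Set.Ioo (0:ℝ) (Real.pi / k))) →
      ∃ q : ℝ → ℂ,
        (MemLp q 2 (volume.restrict (Set.Ioo 0 Real.pi)) ∧
          (∀ᵐ x ∂(volume.restrict (Set.Ioo (0:ℝ) (Real.pi / k))), q x = p x) ∧
          (∀ᵐ t ∂(volume.restrict (Set.Ioo (0:ℝ) Real.pi)), W00 k q t = W t)) ∧
        ∀ q' : ℝ → ℂ,
          (MemLp q' 2 (volume.restrict (Set.Ioo 0 Real.pi)) ∧
            (∀ᵐ x ∂(volume.restrict (Set.Ioo (0:ℝ) (Real.pi / k))), q' x = p x) ∧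
            (∀ᵐ t ∂(volume.restrict (Set.Ioo (0:ℝ) Real.pi)), W00 k q' t = W t)) →
          ∀ᵐ x ∂(volume.restrict (Set.Ioo (0:ℝ) Real.pi)), q' x = q x := by
  have hk0 : (0:ℝ) < (k:ℝ) := by exact_mod_cast (by omega : 0 < k)
  set a := Real.pi / (k:ℝ) with ha_def
  have ha : 0 < a := by rw [ha_def]; positivity
  have hka : (k:ℝ) * a = Real.pi := by rw [ha_def]; field_simp
  have hk2 : (2:ℝ) ≤ (k:ℝ) := by exact_mod_cast hk
  have h2a : 2*a ≤ Real.pi := by nlinarith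
  intro p hp
  have hGae : ∀ᵐ x ∂(volume : Measure ℝ), x ∉ Set.range (fun j : ℕ => (j:ℝ)*a) :=
    measure_eq_zero_iff_ae_notMem.mp ((Set.countable_range _).measure_zero _)
  have hG2ae : ∀ᵐ x ∂(volume : Measure ℝ),
      x ∉ Set.range (fun j : ℕ => Real.pi + a - (j:ℝ)*a) :=
    measure_eq_zero_iff_ae_notMem.mp ((Set.countable_range _).measure_zero _)
  have hdeg' := (ae_restrict_iff' measurableSet_Ioo).mp hdeg
  refine ⟨qAux p W a k, ⟨memLp_qAux k p W ha hka hp hW, ?_, ?_⟩, ?_⟩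
  · rw [ae_restrict_iff' measurableSet_Ioo]
    refine Filter.Eventually.of_forall fun x hx => ?_
    have h0 : x ∈ Set.Ioo (((0:ℕ):ℝ) * a) ((((0:ℕ):ℝ) + 1) * a) := by
      simp only [Nat.cast_zero, zero_mul, zero_add, one_mul]
      exact hx
    rw [qAux_eq p W ha k 0 (by omega) h0]
    simp [gAux]
  · filter_upwards [ae_restrict_of_ae hdeg', ae_restrict_of_ae hGae, ae_restrict_of_ae hG2ae,
      ae_restrict_mem measurableSet_Ioo] with t hdegt hg1 hg2 ht
    have htg : ∀ j : ℕ, t ≠ (j:ℝ)*a := fun j h => hg1 ⟨j, h.symm⟩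
    have hxg : ∀ j : ℕ, Real.pi + a - t ≠ (j:ℝ)*a := fun j h =>
      hg2 ⟨j, show Real.pi + a - (j:ℝ)*a = t from by linarith⟩
    obtain ⟨ht0, htpi⟩ := ht
    simp only [W00]
    rw [← ha_def]
    rcases lt_trichotomy t a with h1 | h1 | h1
    · rw [if_pos (Set.mem_Ioo.mpr ⟨ht0, h1⟩)]
      have hc1 : ((k-1:ℕ):ℝ) = (k:ℝ) - 1 := by
        rw [Nat.cast_sub (by omega : 1 ≤ k)]; norm_num
      have hc2 : ((k-2:ℕ):ℝ) = (k:ℝ) - 2 := by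
        rw [Nat.cast_sub (by omega : 2 ≤ k)]; norm_num
      have hx1 : Real.pi - a + t ∈ Set.Ioo (((k-1:ℕ):ℝ)*a) ((((k-1:ℕ):ℝ)+1)*a) := by
        rw [hc1]; exact ⟨by nlinarith, by nlinarith⟩
      have hx2 : Real.pi - a - t ∈ Set.Ioo (((k-2:ℕ):ℝ)*a) ((((k-2:ℕ):ℝ)+1)*a) := by
        rw [hc2]; exact ⟨by nlinarith, by nlinarith⟩
      rw [qAux_eq p W ha k (k-1) (by omega) hx1, qAux_eq p W ha k (k-2) (by omega) hx2]
      have hmain := main_identity k hk p W a t hka (hdegt ⟨ht0, h1⟩)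
      linear_combination hmain / 2
    · exact absurd h1 (by simpa using htg 1)
    · rcases lt_trichotomy t (Real.pi - a) with h2 | h2 | h2
      · rw [if_neg (fun hm => absurd hm.2 (not_lt.mpr h1.le)),
          if_pos (Set.mem_Ioo.mpr ⟨h1, h2⟩)]
        have hx0 : 0 < Real.pi + a - t := by linarith
        have hxk : Real.pi + a - t < (k:ℝ)*a := by rw [hka]; linarith
        obtain ⟨m, hmk, hm1, hm2⟩ := exists_subinterval ha k hx0 hxk hxg
        have h2m : 2 ≤ m := by
          have hr : (2:ℝ) < (m:ℝ) + 1 := by nlinarith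
          have hr2 : (2:ℕ) < m + 1 := by exact_mod_cast hr
          omega
        obtain ⟨n, rfl⟩ : ∃ n, m = n + 2 := ⟨m - 2, by omega⟩
        push_cast at hm1 hm2
        have hq1 : qAux p W a k (Real.pi + a - t) = gAux p W a (n+2) (Real.pi + a - t) :=
          qAux_eq p W ha k (n+2) hmk (by constructor <;> (push_cast; linarith))
        have hin : Real.pi + a - t - 2*a ∈ Set.Ioo ((n:ℝ)*a) (((n:ℝ)+1)*a) :=
          ⟨by linarith, by linarith⟩
        rw [show Real.pi - a - t = Real.pi + a - t - 2*a from by ring, hq1, gAux_succ_succ,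
          qAux_eq p W ha k n (by omega) hin,
          show Real.pi + a - (Real.pi + a - t) = t from by ring]
        ring
      · refine absurd ?_ (htg (k-1))
        rw [h2, Nat.cast_sub (by omega : 1 ≤ k), Nat.cast_one, ← hka]; ring
      · rw [if_neg (fun hm => absurd hm.2 (not_lt.mpr (by linarith))),
          if_neg (fun hm => absurd hm.2 (not_lt.mpr h2.le)),
          if_pos (Set.mem_Ioo.mpr ⟨h2, htpi⟩)]
        have hq1 : qAux p W a k (Real.pi + a - t) = gAux p W a 1 (Real.pi + a - t) :=
          qAux_eq p W ha k 1 (by omega) (by constructor <;> (push_cast; linarith))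
        have hq2 : qAux p W a k (t - Real.pi + a) = gAux p W a 0 (t - Real.pi + a) :=
          qAux_eq p W ha k 0 (by omega) (by constructor <;> (push_cast; linarith))
        have g1 : gAux p W a 1 (Real.pi + a - t) = -p (t - Real.pi + a) - 2*W t := by
          rw [gAux, if_neg (by decide), show (1+1)/2 = 1 from rfl, Finset.sum_range_one,
            show (((1:ℕ):ℝ) + 1) * a - (Real.pi + a - t) = t - Real.pi + a from by
              push_cast; ring,
            show Real.pi + a - (Real.pi + a - t) + 2*((0:ℕ):ℝ)*a = t from by push_cast; ring]
        have g0 : gAux p W a 0 (t - Real.pi + a) = p (t - Real.pi + a) := by simp [gAux]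
        rw [hq1, hq2, g1, g0]
        ring
  · rintro q' ⟨hq'L, hq'p, hq'W⟩
    have hq'p' := (ae_restrict_iff' measurableSet_Ioo).mp hq'p
    have hq'W' := (ae_restrict_iff' measurableSet_Ioo).mp hq'W
    have hA : ∀ᵐ x ∂(volume : Measure ℝ), (Real.pi + a - x) ∈ Set.Ioo (0:ℝ) Real.pi →
        W00 k q' (Real.pi + a - x) = W (Real.pi + a - x) :=
      ae_comp_mp (mp_refl (Real.pi + a)) hq'W'
    have hB : ∀ᵐ x ∂(volume : Measure ℝ), (2*a - x) ∈ Set.Ioo (0:ℝ) a →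
        q' (2*a - x) = p (2*a - x) :=
      ae_comp_mp (mp_refl (2*a)) hq'p'
    have huniq : ∀ m : ℕ, m < k → ∀ᵐ x ∂(volume : Measure ℝ),
        x ∈ Set.Ioo ((m:ℝ)*a) (((m:ℝ)+1)*a) → q' x = gAux p W a m x := by
      intro m
      induction m using Nat.strong_induction_on with
      | _ m IH =>
        intro hmk
        rcases Nat.lt_or_ge m 2 with hm2 | hm2
        · interval_cases m
          · filter_upwards [hq'p'] with x hx hmem
            have hmem' : x ∈ Set.Ioo (0:ℝ) a := by
              simpa using hmem
            rw [hx hmem']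
            simp [gAux]
          · filter_upwards [hA, hB] with x hAx hBx hmem
            have hm1 : a < x := by
              have := hmem.1; push_cast at this; linarith
            have hm2' : x < 2*a := by
              have := hmem.2; push_cast at this; linarith
            have he := hAx ⟨by linarith, by linarith⟩
            simp only [W00] at he
            rw [← ha_def] at he
            rw [if_neg (fun hmm => absurd hmm.2 (not_lt.mpr (by linarith))),
              if_neg (fun hmm => absurd hmm.2 (not_lt.mpr (by linarith))),
              if_pos (Set.mem_Ioo.mpr ⟨by linarith, by linarith⟩)] at he
            rw [show Real.pi + a - (Real.pi + a - x) = x from by ring,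
              show Real.pi + a - x - Real.pi + a = 2*a - x from by ring] at he
            have hb := hBx ⟨by linarith, by linarith⟩
            rw [hb] at he
            have g1 : gAux p W a 1 x = -p (2*a - x) - 2*W (Real.pi + a - x) := by
              rw [gAux, if_neg (by decide), show (1+1)/2 = 1 from rfl, Finset.sum_range_one,
                show (((1:ℕ):ℝ) + 1) * a - x = 2*a - x from by push_cast; ring,
                show Real.pi + a - x + 2*((0:ℕ):ℝ)*a = Real.pi + a - x from by push_cast; ring]
            rw [g1]
            linear_combination (-2 : ℂ) * he
        · obtain ⟨n, rfl⟩ : ∃ n, m = n + 2 := ⟨m - 2, by omega⟩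
          have hIH := IH n (by omega) (by omega)
          have hC := ae_comp_mp (measurePreserving_sub_right (volume : Measure ℝ) (2*a)) hIH
          filter_upwards [hA, hC] with x hAx hCx hmem
          have hm1 : ((n:ℝ)+2)*a < x := by
            have := hmem.1; push_cast at this; linarith
          have hm2' : x < ((n:ℝ)+3)*a := by
            have := hmem.2; push_cast at this; linarith
          have hk3 : ((n:ℝ)+3) ≤ (k:ℝ) := by exact_mod_cast (by omega : n+3 ≤ k)
          have hb1 : ((n:ℝ)+3)*a ≤ (k:ℝ)*a := by nlinarith
          have hn0 : (0:ℝ) ≤ (n:ℝ) := Nat.cast_nonneg n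
          have hy1 : a < Real.pi + a - x := by nlinarith
          have hy2 : Real.pi + a - x < Real.pi - a := by nlinarith
          have he := hAx ⟨by linarith, by linarith⟩
          simp only [W00] at he
          rw [← ha_def] at he
          rw [if_neg (fun hmm => absurd hmm.2 (not_lt.mpr hy1.le)),
            if_pos (Set.mem_Ioo.mpr ⟨hy1, hy2⟩)] at he
          rw [show Real.pi - a - (Real.pi + a - x) = x - 2*a from by ring,
            show Real.pi + a - (Real.pi + a - x) = x from by ring] at he
          have hc := hCx ⟨by nlinarith, by nlinarith⟩
          rw [hc] at he
          rw [gAux_succ_succ]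
          linear_combination (-2 : ℂ) * he
    have hall : ∀ᵐ x ∂(volume : Measure ℝ), ∀ m : ℕ, m < k →
        (x ∈ Set.Ioo ((m:ℝ)*a) (((m:ℝ)+1)*a) → q' x = gAux p W a m x) := by
      rw [MeasureTheory.ae_all_iff]
      intro m
      rcases Nat.lt_or_ge m k with h | h
      · filter_upwards [huniq m h] with x hx _
        exact hx
      · filter_upwards with x hmk
        omega
    filter_upwards [ae_restrict_of_ae hall, ae_restrict_of_ae hGae,
      ae_restrict_mem measurableSet_Ioo] with x hallx hg hx
    have htg : ∀ j : ℕ, x ≠ (j:ℝ)*a := fun j h => hg ⟨j, h.symm⟩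
    obtain ⟨m, hmk, hb1, hb2⟩ := exists_subinterval ha k hx.1 (by rw [hka]; exact hx.2) htg
    rw [hallx m hmk ⟨hb1, hb2⟩, qAux_eq p W ha k m hmk ⟨hb1, hb2⟩]
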